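/- For d ≥ 2, let S = Σ_{i,j=1}^{d} E_{ij} ⊗ E_{ji} ∈ M_{d²}(ℂ) (the swap operator) and F₀ = (I_{d²} − S)/√(2d(d−1)). Then: (i) F₀ = F₀* and tr(F₀²) = 1; (ii) ‖F₀‖² = 2/(d(d−1)), where ‖·‖ is the operator norm; (iii) for all rank-one orthogonal projections p, q ∈ M_d(ℂ), tr[(p ⊗ q) F₀²] = (1 − tr(p q))/(d(d−1)); and (iv) the maximum of tr[(p ⊗ q) F₀²] over all rank-one orthogonal projections p, q ∈ M_d(ℂ) equals 1/(d(d−1)). -/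

import Mathlib

open scoped Kronecker ComplexOrder
open Matrix

set_option maxHeartbeats 1000000
set_option synthInstance.maxHeartbeats 400000

/-- The operator norm (largest singular value) of a complex matrix. -/
noncomputable def opNorm {m n : Type*} [Fintype m] [Fintype n] [DecidableEq n]
    (A : Matrix m n ℂ) : ℝ :=
  ‖LinearMap.toContinuousLinearMap (Matrix.toEuclideanLin A)‖

/-- `p` is a rank-one orthogonal projection. -/
def IsRankOneProj {m : Type*} [Fintype m] [DecidableEq m]
    (p : Matrix m m ℂ) : Prop :=
  p.IsHermitian ∧ p * p = p ∧ p.trace = 1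

/-- The swap operator `S = ∑ i j, E_{ij} ⊗ E_{ji}` on `ℂ^d ⊗ ℂ^d`. -/
noncomputable def swapMatrix (d : ℕ) :
    Matrix (Fin d × Fin d) (Fin d × Fin d) ℂ :=
  ∑ i : Fin d, ∑ j : Fin d,
    Matrix.single i j (1 : ℂ) ⊗ₖ Matrix.single j i (1 : ℂ)

/-- `F₀ = (I − S) / √(2d(d−1))`. -/
noncomputable def F0 (d : ℕ) : Matrix (Fin d × Fin d) (Fin d × Fin d) ℂ :=
  (((Real.sqrt (2 * d * (d - 1)))⁻¹ : ℝ) : ℂ) • (1 - swapMatrix d)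

/- ### Auxiliary lemmas -/

lemma swap_apply (d : ℕ) (x y : Fin d × Fin d) :
    swapMatrix d x y = if y.1 = x.2 ∧ y.2 = x.1 then 1 else 0 := by
  obtain ⟨a, b⟩ := x; obtain ⟨c, e⟩ := y
  simp [swapMatrix, Matrix.sum_apply, Matrix.single, ite_and,
    Finset.sum_ite_eq, Finset.sum_ite_eq', eq_comm, and_comm]

lemma swap_conjTranspose (d : ℕ) : (swapMatrix d)ᴴ = swapMatrix d := by
  ext x y
  rw [conjTranspose_apply, swap_apply, swap_apply]
  have h : (x.1 = y.2 ∧ x.2 = y.1) ↔ (y.1 = x.2 ∧ y.2 = x.1) :=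
    ⟨fun h => ⟨h.2.symm, h.1.symm⟩, fun h => ⟨h.2.symm, h.1.symm⟩⟩
  rw [if_congr h rfl rfl]
  split_ifs <;> simp

lemma swap_mul_swap (d : ℕ) : swapMatrix d * swapMatrix d = 1 := by
  ext ⟨a, b⟩ ⟨c, e⟩
  simp [mul_apply, swap_apply, Fintype.sum_prod_type, ite_and,
    Finset.sum_ite_eq, Finset.sum_ite_eq', one_apply, Prod.ext_iff, and_comm, eq_comm]

lemma swap_trace (d : ℕ) : (swapMatrix d).trace = d := by
  simp only [trace, diag, swap_apply, Fintype.sum_prod_type]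
  have h : ∀ a b : Fin d, (a = b ∧ b = a) ↔ b = a :=
    fun a b => ⟨fun h => h.2, fun h => ⟨h.symm, h⟩⟩
  simp [h, Finset.sum_ite_eq]

lemma kron_mul_swap_trace (d : ℕ) (p q : Matrix (Fin d) (Fin d) ℂ) :
    ((p ⊗ₖ q) * swapMatrix d).trace = (p * q).trace := by
  simp only [trace, diag, mul_apply, Fintype.sum_prod_type, swap_apply,
    kroneckerMap_apply, ite_and, mul_ite, mul_one, mul_zero, Finset.sum_ite_eq,
    Finset.sum_ite_eq', Finset.mem_univ, if_true]

lemma one_sub_swap_sq (d : ℕ) :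
    (1 - swapMatrix d) * (1 - swapMatrix d) = (2 : ℂ) • (1 - swapMatrix d) := by
  rw [sub_mul, mul_sub, mul_sub, one_mul, one_mul, mul_one, swap_mul_swap, two_smul]
  abel

lemma F0_sq (d : ℕ) (hd : 2 ≤ d) :
    F0 d ^ 2 = ((((d : ℝ) * ((d : ℝ) - 1))⁻¹ : ℝ) : ℂ) • (1 - swapMatrix d) := by
  have hd2 : (2 : ℝ) ≤ (d : ℝ) := by exact_mod_cast hd
  have hx : (0 : ℝ) ≤ 2 * (d : ℝ) * ((d : ℝ) - 1) := by nlinarith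
  have hsq : (Real.sqrt (2 * (d : ℝ) * ((d : ℝ) - 1)))⁻¹ ^ 2
      = (2 * (d : ℝ) * ((d : ℝ) - 1))⁻¹ := by
    rw [inv_pow, Real.sq_sqrt hx]
  have hc : ((Real.sqrt (2 * (d : ℝ) * ((d : ℝ) - 1)))⁻¹ ^ 2) * 2
      = ((d : ℝ) * ((d : ℝ) - 1))⁻¹ := by
    rw [hsq]
    have h1 : (d : ℝ) ≠ 0 := by positivity
    have h2 : (d : ℝ) - 1 ≠ 0 := by nlinarith
    field_simp
  rw [F0, smul_pow, sq (1 - swapMatrix d), one_sub_swap_sq, smul_smul]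
  congr 1
  rw [← hc]
  push_cast
  ring

lemma F0_herm (d : ℕ) : (F0 d)ᴴ = F0 d := by
  rw [F0, conjTranspose_smul, conjTranspose_sub, conjTranspose_one, swap_conjTranspose]
  congr 1
  simp

lemma one_sub_swap_trace (d : ℕ) :
    (1 - swapMatrix d).trace = (d : ℂ) * (d : ℂ) - (d : ℂ) := by
  rw [trace_sub, trace_one, swap_trace]
  simp [Fintype.card_prod]

/-- tr(pq) is nonnegative for Hermitian idempotents. -/
lemma trace_mul_proj_nonneg {d : ℕ} (p q : Matrix (Fin d) (Fin d) ℂ)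
    (hp : IsRankOneProj p) (hq : IsRankOneProj q) : 0 ≤ (p * q).trace := by
  have key : (q * p)ᴴ * (q * p) = p * q * p := by
    rw [conjTranspose_mul, hp.1, hq.1, Matrix.mul_assoc p q (q * p),
      ← Matrix.mul_assoc q q p, hq.2.1, ← Matrix.mul_assoc]
  have key2 : (p * q * p).trace = (p * q).trace := by
    rw [trace_mul_comm, ← Matrix.mul_assoc, hp.2.1]
  rw [show (p * q).trace = ((q * p)ᴴ * (q * p)).trace by rw [key, key2]]
  simp only [trace, diag, mul_apply, conjTranspose_apply]
  refine Finset.sum_nonneg fun j _ => Finset.sum_nonneg fun i _ => ?_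
  rw [Complex.star_def, ← Complex.normSq_eq_conj_mul_self]
  exact_mod_cast Complex.normSq_nonneg _

lemma trace_formula (d : ℕ) (hd : 2 ≤ d) (p q : Matrix (Fin d) (Fin d) ℂ)
    (hp : IsRankOneProj p) (hq : IsRankOneProj q) :
    ((p ⊗ₖ q) * F0 d ^ 2).trace =
      (1 - (p * q).trace) / ((d : ℂ) * ((d : ℂ) - 1)) := by
  rw [F0_sq d hd, Matrix.mul_smul, trace_smul, Matrix.mul_sub, trace_sub, Matrix.mul_one,
    trace_kronecker, hp.2.2, hq.2.2, kron_mul_swap_trace]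
  rw [smul_eq_mul, one_mul]
  have hd2 : (2 : ℝ) ≤ (d : ℝ) := by exact_mod_cast hd
  have h0 : ((d : ℂ) * ((d : ℂ) - 1)) ≠ 0 :=
    mul_ne_zero (Nat.cast_ne_zero.mpr (by omega))
      (sub_ne_zero.mpr (by exact_mod_cast (by omega : d ≠ 1)))
  push_cast
  rw [div_eq_mul_inv, mul_comm]


lemma opNorm_eq_clm {m : Type*} [Fintype m] [DecidableEq m] (A : Matrix m m ℂ) :
    opNorm A = ‖toEuclideanCLM (𝕜 := ℂ) A‖ := by
  unfold opNorm
  congr 1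

lemma norm_one_sub_swap (d : ℕ) (hd : 2 ≤ d) :
    ‖toEuclideanCLM (𝕜 := ℂ) (n := Fin d × Fin d) (1 - swapMatrix d)‖ = 2 := by
  set U := toEuclideanCLM (𝕜 := ℂ) (n := Fin d × Fin d) (1 - swapMatrix d) with hU
  have hstar : star U = U := by
    rw [hU, ← map_star (toEuclideanCLM (𝕜 := ℂ) (n := Fin d × Fin d)),
      Matrix.star_eq_conjTranspose, conjTranspose_sub,
      conjTranspose_one, swap_conjTranspose]
  have hmul : U * U = (2 : ℂ) • U := by
    rw [hU, ← _root_.map_mul (toEuclideanCLM (𝕜 := ℂ) (n := Fin d × Fin d)),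
      one_sub_swap_sq, _root_.map_smul]
  have hne : U ≠ 0 := by
    intro h
    have h0 : (1 - swapMatrix d) = (0 : Matrix (Fin d × Fin d) (Fin d × Fin d) ℂ) := by
      apply (toEuclideanCLM (𝕜 := ℂ)).injective
      rw [map_zero]; exact h
    have := congrFun (congrFun h0 (⟨0, by omega⟩, ⟨1, by omega⟩))
      (⟨1, by omega⟩, ⟨0, by omega⟩)
    simp [Matrix.sub_apply, one_apply, swap_apply, Prod.ext_iff, Fin.ext_iff] at this
  have h2 : ‖U‖ * ‖U‖ = 2 * ‖U‖ := by
    rw [← CStarRing.norm_star_mul_self, hstar, hmul, norm_smul (α := ℂ) 2 U]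
    simp
  have hpos : 0 < ‖U‖ := norm_pos_iff.mpr hne
  nlinarith

lemma std_proj (d : ℕ) (i : Fin d) : IsRankOneProj (Matrix.single i i (1 : ℂ)) := by
  refine ⟨?_, ?_, ?_⟩
  · show _ᴴ = _
    ext a b
    simp [conjTranspose_apply, Matrix.single, and_comm, apply_ite (star : ℂ → ℂ)]
  · rw [Matrix.single_mul_single_same, mul_one]
  · exact Matrix.trace_single_eq_same i _

theorem F0_properties (d : ℕ) (hd : 2 ≤ d) :
    -- (i) F₀ is Hermitian with tr(F₀²) = 1
    ((F0 d)ᴴ = F0 d ∧ (F0 d ^ 2).trace = 1)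
    ∧
    -- (ii) ‖F₀‖² = 2/(d(d−1))
    (opNorm (F0 d) ^ 2 = 2 / ((d : ℝ) * ((d : ℝ) - 1)))
    ∧
    -- (iii) tr[(p ⊗ q) F₀²] = (1 − tr(pq))/(d(d−1)) for rank-one projections p, q
    (∀ p q : Matrix (Fin d) (Fin d) ℂ, IsRankOneProj p → IsRankOneProj q →
      ((p ⊗ₖ q) * F0 d ^ 2).trace =
        (1 - (p * q).trace) / ((d : ℂ) * ((d : ℂ) - 1)))
    ∧
    -- (iv) the maximum of tr[(p ⊗ q) F₀²] over rank-one projections is 1/(d(d−1))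
    IsGreatest {x : ℝ | ∃ p q : Matrix (Fin d) (Fin d) ℂ,
        IsRankOneProj p ∧ IsRankOneProj q ∧
        ((p ⊗ₖ q) * F0 d ^ 2).trace = (x : ℂ)}
      (1 / ((d : ℝ) * ((d : ℝ) - 1))) := by
  have hd2 : (2 : ℝ) ≤ (d : ℝ) := by exact_mod_cast hd
  have hrpos : (0 : ℝ) < (d : ℝ) * ((d : ℝ) - 1) := by nlinarith
  have h0C : ((d : ℂ) * ((d : ℂ) - 1)) ≠ 0 :=
    mul_ne_zero (Nat.cast_ne_zero.mpr (by omega))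
      (sub_ne_zero.mpr (by exact_mod_cast (by omega : d ≠ 1)))
  refine ⟨⟨F0_herm d, ?_⟩, ?_, trace_formula d hd, ?_, ?_⟩
  · -- trace of F0²
    rw [F0_sq d hd, trace_smul, one_sub_swap_trace, smul_eq_mul]
    push_cast
    have h1C : (d : ℂ) - 1 ≠ 0 := right_ne_zero_of_mul h0C
    field_simp
  · -- operator norm
    rw [opNorm_eq_clm, sq, ← CStarRing.norm_star_mul_self,
      ← map_star (toEuclideanCLM (𝕜 := ℂ) (n := Fin d × Fin d)),
      ← _root_.map_mul (toEuclideanCLM (𝕜 := ℂ) (n := Fin d × Fin d)),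
      Matrix.star_eq_conjTranspose, F0_herm, ← sq, F0_sq d hd,
      _root_.map_smul,
      norm_smul (α := ℂ) (((((d : ℝ) * ((d : ℝ) - 1))⁻¹ : ℝ) : ℂ))
        (toEuclideanCLM (𝕜 := ℂ) (n := Fin d × Fin d) (1 - swapMatrix d)),
      norm_one_sub_swap d hd]
    have hnr : ‖(((((d : ℝ) * ((d : ℝ) - 1))⁻¹ : ℝ)) : ℂ)‖
        = ((d : ℝ) * ((d : ℝ) - 1))⁻¹ := by
      rw [Complex.norm_real]
      exact abs_of_nonneg (by positivity)
    rw [hnr, div_eq_mul_inv]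
    ring
  · -- membership: the value 1/(d(d-1)) is attained
    set i0 : Fin d := ⟨0, by omega⟩
    set i1 : Fin d := ⟨1, by omega⟩
    have hne : i0 ≠ i1 := by simp [i0, i1, Fin.ext_iff]
    refine ⟨Matrix.single i0 i0 1, Matrix.single i1 i1 1,
      std_proj d i0, std_proj d i1, ?_⟩
    rw [trace_formula d hd _ _ (std_proj d i0) (std_proj d i1),
      Matrix.single_mul_single_of_ne (i := i0) (j := i0) (h := hne), trace_zero]
    push_cast
    rw [sub_zero]
  · -- upper bound
    rintro x ⟨p, q, hp, hq, htr⟩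
    rw [trace_formula d hd p q hp hq] at htr
    have ht := trace_mul_proj_nonneg p q hp hq
    obtain ⟨htre, htim⟩ := Complex.nonneg_iff.mp ht
    set t := (p * q).trace with htdef
    have hteq : t = ((t.re : ℝ) : ℂ) := Complex.ext (by simp) (by simp [← htim])
    rw [hteq] at htr
    have : ((x : ℂ)) = (((1 - t.re) / ((d : ℝ) * ((d : ℝ) - 1)) : ℝ) : ℂ) := by
      rw [← htr]; push_cast; ring
    have hx : x = (1 - t.re) / ((d : ℝ) * ((d : ℝ) - 1)) := by exact_mod_cast this
    rw [hx]
    gcongr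
    linarith
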